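/- For ν > 0, d > 0, and f locally integrable on [0,∞) of at most exponential growth, the Sumudu transform of the Riemann–Liouville fractional integral of order ν of f equals u^ν times the Sumudu transform of f: S[(₀D_t^{-ν} f)](u) = u^ν · S[f](u) for all u > 0 where both sides are defined. -/

import Mathlib

open MeasureTheory

/-- The Riemann–Liouville fractional integral `(₀D_t^{-ν} f)(t)`. -/
noncomputable def rlInt (ν : ℝ) (f : ℝ → ℝ) (t : ℝ) : ℝ :=
  (1 / Real.Gamma ν) * ∫ s in (0 : ℝ)..t, (t - s) ^ (ν - 1) * f s


lemma lemA {ν : ℝ} (hν : 0 < ν) (σ : ℝ) :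
    IntegrableOn (fun t => Real.exp (-t) * (t - σ) ^ (ν - 1)) (Set.Ioi σ) ∧
    ∫ t in Set.Ioi σ, Real.exp (-t) * (t - σ) ^ (ν - 1)
      = Real.exp (-σ) * Real.Gamma ν := by
  have he : MeasurableEmbedding (fun r : ℝ => r + σ) :=
    (MeasurableEquiv.addRight σ).measurableEmbedding
  have hmap : Measure.map (fun r : ℝ => r + σ) volume = volume :=
    map_add_right_eq_self volume σ
  have hpre : (fun r : ℝ => r + σ) ⁻¹' (Set.Ioi σ) = Set.Ioi 0 := by
    rw [Set.preimage_add_const_Ioi]; simp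
  have hres : volume.restrict (Set.Ioi σ)
      = Measure.map (fun r : ℝ => r + σ) (volume.restrict (Set.Ioi 0)) := by
    rw [← hpre, ← he.restrict_map, hmap]
  have hcomp : (fun r : ℝ => Real.exp (-(r + σ)) * (r + σ - σ) ^ (ν - 1))
      = fun r : ℝ => Real.exp (-σ) * (Real.exp (-r) * r ^ (ν - 1)) := by
    funext r
    rw [add_sub_cancel_right, neg_add, Real.exp_add]
    ring
  constructor
  · rw [IntegrableOn, hres, he.integrable_map_iff]
    have : ((fun t => Real.exp (-t) * (t - σ) ^ (ν - 1)) ∘ fun r : ℝ => r + σ)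
        = fun r : ℝ => Real.exp (-σ) * (Real.exp (-r) * r ^ (ν - 1)) := by
      rw [← hcomp]; rfl
    rw [this]
    exact ((Real.GammaIntegral_convergent hν).const_mul _)
  · rw [← hmap, he.setIntegral_map, hpre]
    simp only [hcomp]
    rw [MeasureTheory.integral_const_mul, ← Real.Gamma_eq_integral hν]

lemma lemB {ν u : ℝ} (f : ℝ → ℝ) (hu : 0 < u) {t : ℝ} (ht : 0 < t) :
    rlInt ν f (u * t)
      = (u ^ ν / Real.Gamma ν) * ∫ σ in (0:ℝ)..t, (t - σ) ^ (ν - 1) * f (u * σ) := by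
  have key := intervalIntegral.integral_comp_mul_left (a := (0:ℝ)) (b := t) (c := u)
    (fun s => (u*t - s) ^ (ν - 1) * f s) hu.ne'
  simp only [smul_eq_mul, mul_zero] at key
  have hcongr : (∫ σ in (0:ℝ)..t, (u * t - u * σ) ^ (ν - 1) * f (u * σ))
      = u ^ (ν - 1) * ∫ σ in (0:ℝ)..t, (t - σ) ^ (ν - 1) * f (u * σ) := by
    rw [← intervalIntegral.integral_const_mul]
    apply intervalIntegral.integral_congr
    intro σ hσ
    rw [Set.uIcc_of_le ht.le] at hσ
    have h1 : u * t - u * σ = u * (t - σ) := by ring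
    simp only [h1, Real.mul_rpow hu.le (sub_nonneg.mpr hσ.2)]
    ring
  rw [hcongr] at key
  have h2 : (∫ s in (0:ℝ)..(u*t), (u*t - s) ^ (ν-1) * f s)
      = u * u ^ (ν - 1) * (∫ σ in (0:ℝ)..t, (t - σ) ^ (ν - 1) * f (u * σ)) := by
    rw [mul_assoc, key, ← mul_assoc, mul_inv_cancel₀ hu.ne', one_mul]
  have h3 : u * u ^ (ν - 1) = u ^ ν := by
    nth_rewrite 1 [← Real.rpow_one u]
    rw [← Real.rpow_add hu]
    norm_num
  rw [rlInt, h2, h3]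
  ring


/-- The Sumudu transform of the Riemann–Liouville fractional integral of order ν of f
equals `u^ν` times the Sumudu transform of f, for f locally integrable on `[0,∞)` of at
most exponential growth, wherever both sides are defined. -/
theorem sumudu_rlInt (ν : ℝ) (hν : 0 < ν) (f : ℝ → ℝ)
    (hloc : LocallyIntegrableOn f (Set.Ici 0))
    (M a : ℝ) (hgrow : ∀ t ≥ (0 : ℝ), |f t| ≤ M * Real.exp (a * t))
    (u : ℝ) (hu : 0 < u)
    (h1 : IntegrableOn (fun t => Real.exp (-t) * rlInt ν f (u * t)) (Set.Ioi 0))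
    (h2 : IntegrableOn (fun t => Real.exp (-t) * f (u * t)) (Set.Ioi 0)) :
    (∫ t in Set.Ioi (0 : ℝ), Real.exp (-t) * rlInt ν f (u * t)) =
      u ^ ν * ∫ t in Set.Ioi (0 : ℝ), Real.exp (-t) * f (u * t) := by
  have hGpos := Real.Gamma_pos_of_pos hν
  have hupos : (0:ℝ) < u ^ ν := Real.rpow_pos_of_pos hu ν
  set μ0 : Measure ℝ := volume.restrict (Set.Ioi 0) with hμ0
  have hg_meas : AEStronglyMeasurable (fun σ => f (u * σ)) μ0 := by
    have h : (fun σ : ℝ => f (u * σ))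
        = fun σ => Real.exp σ * (Real.exp (-σ) * f (u * σ)) := by
      funext σ; rw [← mul_assoc, ← Real.exp_add]; simp
    rw [h]
    exact (Real.measurable_exp.aestronglyMeasurable).mul h2.aestronglyMeasurable
  set F : ℝ × ℝ → ℝ := fun p =>
    {q : ℝ × ℝ | q.1 < q.2}.indicator
      (fun q => Real.exp (-q.2) * (q.2 - q.1) ^ (ν - 1)) p * f (u * p.1) with hFdef
  have hF_slice : ∀ σ t : ℝ, F (σ, t)
      = (Set.Ioi σ).indicator (fun t => Real.exp (-t) * (t - σ) ^ (ν - 1)) t * f (u * σ) := by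
    intro σ t
    by_cases h : σ < t <;> simp [hFdef, Set.indicator_apply, h]
  have hF_slice2 : ∀ σ t : ℝ, F (σ, t)
      = (Set.Iio t).indicator (fun σ => Real.exp (-t) * (t - σ) ^ (ν - 1) * f (u * σ)) σ := by
    intro σ t
    by_cases h : σ < t <;> simp [hFdef, Set.indicator_apply, h, mul_assoc]
  have hF_meas : AEStronglyMeasurable F (μ0.prod μ0) := by
    apply AEStronglyMeasurable.mul
    · apply Measurable.aestronglyMeasurable
      apply Measurable.indicator
      · exact (measurable_snd.neg.exp).mul ((measurable_snd.sub measurable_fst).pow_const (ν - 1))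
      · exact measurableSet_lt measurable_fst measurable_snd
    · exact hg_meas.comp_quasiMeasurePreserving Measure.quasiMeasurePreserving_fst
  have hslice_int : ∀ σ : ℝ, 0 < σ → Integrable (fun t => F (σ, t)) μ0 := by
    intro σ hσ
    simp only [hF_slice]
    apply Integrable.mul_const
    rw [integrable_indicator_iff measurableSet_Ioi, IntegrableOn, hμ0,
      Measure.restrict_restrict measurableSet_Ioi,
      Set.inter_eq_left.mpr (Set.Ioi_subset_Ioi hσ.le)]
    exact (lemA hν σ).1
  have hind_int : ∀ σ : ℝ, 0 < σ →
      (∫ t, (Set.Ioi σ).indicator (fun t => Real.exp (-t) * (t - σ) ^ (ν - 1)) t ∂μ0)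
        = Real.exp (-σ) * Real.Gamma ν := by
    intro σ hσ
    rw [integral_indicator measurableSet_Ioi, hμ0,
      Measure.restrict_restrict measurableSet_Ioi,
      Set.inter_eq_left.mpr (Set.Ioi_subset_Ioi hσ.le)]
    exact (lemA hν σ).2
  have hnorm_eq : ∀ σ : ℝ, 0 < σ →
      (∫ t, ‖F (σ, t)‖ ∂μ0) = Real.Gamma ν * (Real.exp (-σ) * |f (u * σ)|) := by
    intro σ hσ
    have heq : (fun t => ‖F (σ, t)‖)
        = fun t => (Set.Ioi σ).indicator (fun t => Real.exp (-t) * (t - σ) ^ (ν - 1)) t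
            * |f (u * σ)| := by
      funext t
      rw [hF_slice, Real.norm_eq_abs, abs_mul]
      congr 1
      by_cases h : t ∈ Set.Ioi σ
      · simp only [Set.indicator_of_mem h]
        exact abs_of_nonneg (mul_nonneg (Real.exp_pos _).le
          (Real.rpow_nonneg (sub_nonneg.mpr (le_of_lt h)) _))
      · simp [Set.indicator_of_notMem h]
    rw [heq, integral_mul_const, hind_int σ hσ]
    ring
  have hF_int : Integrable F (μ0.prod μ0) := by
    rw [integrable_prod_iff hF_meas]
    constructor
    · filter_upwards [ae_restrict_mem measurableSet_Ioi] with σ hσ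
      exact hslice_int σ hσ
    · have habs : Integrable (fun σ => Real.exp (-σ) * |f (u * σ)|) μ0 := by
        have h := h2.abs
        simpa [abs_mul, Real.abs_exp] using h
      apply (habs.const_mul (Real.Gamma ν)).congr
      filter_upwards [ae_restrict_mem measurableSet_Ioi] with σ hσ
      exact (hnorm_eq σ hσ).symm
  have hswap : (∫ σ, (∫ t, F (σ, t) ∂μ0) ∂μ0) = ∫ t, (∫ σ, F (σ, t) ∂μ0) ∂μ0 :=
    integral_integral_swap hF_int
  have hleft : (∫ σ, (∫ t, F (σ, t) ∂μ0) ∂μ0)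
      = Real.Gamma ν * ∫ σ, Real.exp (-σ) * f (u * σ) ∂μ0 := by
    rw [← integral_const_mul]
    apply integral_congr_ae
    filter_upwards [ae_restrict_mem measurableSet_Ioi] with σ hσ
    simp only [hF_slice]
    rw [integral_mul_const, hind_int σ hσ]
    ring
  have hright : ∀ t : ℝ, 0 < t →
      Real.exp (-t) * rlInt ν f (u * t)
        = (u ^ ν / Real.Gamma ν) * (∫ σ, F (σ, t) ∂μ0) := by
    intro t ht
    have hA : (∫ σ, F (σ, t) ∂μ0)
        = ∫ σ in Set.Ioo 0 t, Real.exp (-t) * (t - σ) ^ (ν - 1) * f (u * σ) := by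
      simp only [hF_slice2]
      rw [integral_indicator measurableSet_Iio, hμ0,
        Measure.restrict_restrict measurableSet_Iio, Set.Iio_inter_Ioi]
    rw [hA, lemB f hu ht, intervalIntegral.integral_of_le ht.le,
      MeasureTheory.integral_Ioc_eq_integral_Ioo]
    simp only [mul_assoc]
    rw [MeasureTheory.integral_const_mul]
    ring
  calc (∫ t, Real.exp (-t) * rlInt ν f (u * t) ∂μ0)
      = ∫ t, (u ^ ν / Real.Gamma ν) * (∫ σ, F (σ, t) ∂μ0) ∂μ0 := by
        apply integral_congr_ae
        filter_upwards [ae_restrict_mem measurableSet_Ioi] with t ht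
        exact hright t ht
    _ = (u ^ ν / Real.Gamma ν) * ∫ t, (∫ σ, F (σ, t) ∂μ0) ∂μ0 := integral_const_mul _ _
    _ = (u ^ ν / Real.Gamma ν) * (∫ σ, (∫ t, F (σ, t) ∂μ0) ∂μ0) := by rw [hswap]
    _ = (u ^ ν / Real.Gamma ν) * (Real.Gamma ν * ∫ σ, Real.exp (-σ) * f (u * σ) ∂μ0) := by
        rw [hleft]
    _ = u ^ ν * ∫ t, Real.exp (-t) * f (u * t) ∂μ0 := by
        rw [← mul_assoc, div_mul_cancel₀ _ hGpos.ne']
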